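/- Let G be a complete k-edge-colored graph. Assume that for every color i ∈ {1,…,k} the monochromatic subgraph G_{|i} (together with some labeling ℓ_i, possibly different for each i) is a simple permutation graph, and that for every strong prime module M of G with |M| ≥ 3 exactly two distinct colors appear on the edges of the quotient graph G[M]/P_max(M). Then G is a complete edge-colored permutation graph. -/

import Mathlib

/-- The edge relation `E` on `V` together with the labeling `ℓ : V ≃ Fin n`
is the simple permutation graph of the permutation `π` of `{1,…,n}`:
`{u,v} ∈ E ⇔ ℓ(u) > ℓ(v) and π⁻¹(ℓ(u)) < π⁻¹(ℓ(v))` (stated symmetrically in `u,v`). -/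
def IsPermGraph {V : Type*} {n : ℕ} (E : V → V → Prop) (ℓ : V ≃ Fin n)
    (π : Equiv.Perm (Fin n)) : Prop :=
  ∀ u v : V, E u v ↔
    ((ℓ v < ℓ u ∧ π⁻¹ (ℓ u) < π⁻¹ (ℓ v)) ∨ (ℓ u < ℓ v ∧ π⁻¹ (ℓ v) < π⁻¹ (ℓ u)))

/-- `c` is the edge-coloring of a complete `k`-edge-colored graph on `V`:
it is symmetric, every pair of distinct vertices receives a color in `{1,…,k}`,
and every color in `{1,…,k}` occurs on some edge. -/
def IsCompleteColoring {V : Type*} (k : ℕ) (c : V → V → ℕ) : Prop :=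
  (∀ u v : V, c u v = c v u) ∧
  (∀ u v : V, u ≠ v → c u v ∈ Finset.Icc 1 k) ∧
  (∀ i ∈ Finset.Icc 1 k, ∃ u v : V, u ≠ v ∧ c u v = i)

/-- The edge relation of the `i`-th monochromatic subgraph `G_{|i}`. -/
def monoEdge {V : Type*} (c : V → V → ℕ) (i : ℕ) : V → V → Prop :=
  fun u v => u ≠ v ∧ c u v = i

/-- The complete edge-colored graph with coloring `c` is a complete edge-colored
permutation graph: there are a labeling `ℓ` and permutations `π i` such that every
monochromatic subgraph `(G_{|i}, ℓ)` is the simple permutation graph of `π i`. -/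
def IsCECPG {V : Type*} [Fintype V] (c : V → V → ℕ) : Prop :=
  ∃ (ℓ : V ≃ Fin (Fintype.card V)) (π : ℕ → Equiv.Perm (Fin (Fintype.card V))),
    ∀ i : ℕ, IsPermGraph (monoEdge c i) ℓ (π i)

/-- `c` contains a rainbow triangle: three vertices whose three connecting edges
have pairwise distinct colors. -/
def HasRainbowTriangle {V : Type*} (c : V → V → ℕ) : Prop :=
  ∃ u v w : V, u ≠ v ∧ u ≠ w ∧ v ≠ w ∧
    c u v ≠ c u w ∧ c u v ≠ c v w ∧ c u w ≠ c v w

/-- `M` is a module of the complete edge-colored graph with coloring `c`. -/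
def IsModule {V : Type*} (c : V → V → ℕ) (M : Set V) : Prop :=
  ∀ u ∈ M, ∀ w ∈ M, ∀ v ∉ M, c u v = c w v

/-- `M` is a strong module: a module that overlaps no other module. -/
def IsStrongModule {V : Type*} (c : V → V → ℕ) (M : Set V) : Prop :=
  IsModule c M ∧ ∀ M' : Set V, IsModule c M' → M ⊆ M' ∨ M' ⊆ M ∨ M ∩ M' = ∅

/-- `N` is a member of `P_max(M)`: a non-empty strong module that is a proper subset
of `M` and is inclusion-maximal among strong modules properly contained in `M`. -/
def PmaxPart {V : Type*} (c : V → V → ℕ) (M N : Set V) : Prop :=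
  N.Nonempty ∧ IsStrongModule c N ∧ N ⊂ M ∧
    ∀ N' : Set V, IsStrongModule c N' → N' ⊂ M → N ⊆ N' → N' = N

/-- The edge relation of the `i`-th monochromatic subgraph of the quotient graph
`G[M]/P_max(M)`: two distinct parts are adjacent with color `i` iff some (equivalently,
by the module property, every) edge between them has color `i`. -/
def quotientMonoEdge {V : Type*} (c : V → V → ℕ) (M : Set V) (i : ℕ) :
    {N : Set V // PmaxPart c M N} → {N : Set V // PmaxPart c M N} → Prop :=
  fun N₁ N₂ => N₁ ≠ N₂ ∧ ∃ u ∈ N₁.1, ∃ v ∈ N₂.1, c u v = i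

/-- The quotient graph `G[M]/P_max(M)` is a complete edge-colored permutation graph. -/
def QuotientIsCECPG {V : Type*} (c : V → V → ℕ) (M : Set V) : Prop :=
  ∃ (m : ℕ) (ℓ : {N : Set V // PmaxPart c M N} ≃ Fin m)
    (π : ℕ → Equiv.Perm (Fin m)),
    ∀ i : ℕ, IsPermGraph (quotientMonoEdge c M i) ℓ (π i)

/-- The strong module `M` (with `|M| ≥ 2`) is series: its quotient graph has at least
two vertices and all its edges carry the same color. -/
def IsSeriesModule {V : Type*} (c : V → V → ℕ) (M : Set V) : Prop :=
  (∃ N₁ N₂ : Set V, PmaxPart c M N₁ ∧ PmaxPart c M N₂ ∧ N₁ ≠ N₂) ∧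
  (∀ N₁ N₂ N₁' N₂' : Set V, PmaxPart c M N₁ → PmaxPart c M N₂ →
    PmaxPart c M N₁' → PmaxPart c M N₂' → N₁ ≠ N₂ → N₁' ≠ N₂' →
    ∀ u v u' v' : V, u ∈ N₁ → v ∈ N₂ → u' ∈ N₁' → v' ∈ N₂' → c u v = c u' v')

/-- The color `i` appears on some edge of the quotient graph `G[M]/P_max(M)`. -/
def QuotientColorAppears {V : Type*} (c : V → V → ℕ) (M : Set V) (i : ℕ) : Prop :=
  ∃ N₁ N₂ : Set V, PmaxPart c M N₁ ∧ PmaxPart c M N₂ ∧ N₁ ≠ N₂ ∧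
    ∃ u ∈ N₁, ∃ v ∈ N₂, c u v = i

open Set

noncomputable def cmpr {α : Type*} (s : Set α) (f : α → ℕ) : α → ℕ :=
  fun v => (s ∩ {w | f w < f v}).ncard

lemma cmpr_le {α : Type*} {s : Set α} (hs : s.Finite) (f : α → ℕ)
    {u v : α} (h : f u ≤ f v) : cmpr s f u ≤ cmpr s f v := by
  apply Set.ncard_le_ncard _ (hs.inter_of_left _)
  exact inter_subset_inter_right _ (fun w hw => lt_of_lt_of_le hw h)

lemma cmpr_strict {α : Type*} {s : Set α} (hs : s.Finite) (f : α → ℕ)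
    {u v : α} (hu : u ∈ s) (h : f u < f v) : cmpr s f u < cmpr s f v := by
  apply Set.ncard_lt_ncard _ (hs.inter_of_left _)
  constructor
  · exact inter_subset_inter_right _ (fun w hw => lt_trans hw h)
  · intro hsub
    have : u ∈ s ∩ {w | f w < f v} := ⟨hu, h⟩
    exact lt_irrefl (f u) (hsub this).2

lemma cmpr_lt_iff {α : Type*} {s : Set α} (hs : s.Finite) (f : α → ℕ)
    {u v : α} (hu : u ∈ s) (hv : v ∈ s) : cmpr s f u < cmpr s f v ↔ f u < f v := by
  constructor
  · intro h
    rcases lt_trichotomy (f u) (f v) with h'|h'|h'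
    · exact h'
    · exfalso
      rw [show cmpr s f u = cmpr s f v by
        unfold cmpr; rw [show {w | f w < f u} = {w | f w < f v} by ext w; simp [h']]] at h
      exact lt_irrefl _ h
    · have := cmpr_strict hs f hv h'
      omega
  · exact cmpr_strict hs f hu

lemma cmpr_eq_iff {α : Type*} {s : Set α} (hs : s.Finite) (f : α → ℕ)
    {u v : α} (hu : u ∈ s) (hv : v ∈ s) : cmpr s f u = cmpr s f v ↔ f u = f v := by
  have h1 := cmpr_lt_iff hs f hu hv
  have h2 := cmpr_lt_iff hs f hv hu
  omega

lemma cmpr_bound {α : Type*} {s : Set α} (hs : s.Finite) (f : α → ℕ)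
    {v : α} (hv : v ∈ s) : cmpr s f v < s.ncard := by
  apply Set.ncard_lt_ncard _ hs
  constructor
  · exact inter_subset_left
  · intro hsub
    exact lt_irrefl (f v) (hsub hv).2

lemma lex_lt {a b x B : ℕ} (y : ℕ) (hx : x < B) (h : a < b) : a*B + x < b*B + y := by
  have h1 : a*B + x < (a+1)*B := by rw [add_mul, one_mul]; omega
  have h2 : (a+1)*B ≤ b*B := Nat.mul_le_mul_right B h
  omega

lemma lex_lt_iff_of_ne {a b x y B : ℕ} (hx : x < B) (hy : y < B) (hab : a ≠ b) :
    a*B + x < b*B + y ↔ a < b := by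
  constructor
  · intro h
    rcases lt_trichotomy a b with h'|h'|h'
    · exact h'
    · exact absurd h' hab
    · have := lex_lt (B := B) x hy h'
      omega
  · exact lex_lt y hx

lemma lex_lt_iff_of_eq {a x y B : ℕ} : a*B + x < a*B + y ↔ x < y := by omega

lemma singleton_strong {V : Type*} (c : V → V → ℕ) (v : V) :
    IsStrongModule c {v} := by
  constructor
  · intro u hu w hw x _
    rw [Set.mem_singleton_iff] at hu hw; rw [hu, hw]
  · intro M' hM'
    by_cases h : v ∈ M'
    · exact Or.inl (by simpa using h)
    · right; right; ext x
      simp only [Set.mem_inter_iff, Set.mem_singleton_iff, Set.mem_empty_iff_false, iff_false,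
        not_and]
      rintro rfl; exact h

/-- existence of a maximal strong proper submodule containing a given vertex -/
lemma exists_pmaxpart {V : Type*} [Fintype V] (c : V → V → ℕ) {M : Set V}
    (hM : IsStrongModule c M) (h2 : 1 < M.ncard) {v : V} (hv : v ∈ M) :
    ∃ N, PmaxPart c M N ∧ v ∈ N := by
  have hMfin : M.Finite := Set.toFinite M
  set S : Set (Set V) := {N | IsStrongModule c N ∧ v ∈ N ∧ N ⊂ M} with hS
  have hSfin : S.Finite := Set.toFinite S
  have hsing : ({v} : Set V) ∈ S := by
    refine ⟨singleton_strong c v, rfl, ?_⟩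
    obtain ⟨w, hw, hwv⟩ := Set.exists_ne_of_one_lt_ncard h2 v
    refine HasSubset.Subset.ssubset_of_ne (by simpa using hv) ?_
    intro h
    rw [← h] at hw
    exact hwv hw
  obtain ⟨N, hNS, hmax⟩ := Set.Finite.exists_maximalFor Set.ncard S hSfin ⟨_, hsing⟩
  obtain ⟨hNstrong, hvN, hNM⟩ := hNS
  refine ⟨N, ⟨⟨v, hvN⟩, hNstrong, hNM, ?_⟩, hvN⟩
  intro N' hN' hN'M hNN'
  have hN'S : N' ∈ S := ⟨hN', hNN' hvN, hN'M⟩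
  have hle : N.ncard ≤ N'.ncard := Set.ncard_le_ncard hNN' (Set.toFinite N')
  have := hmax hN'S hle
  exact (Set.eq_of_subset_of_ncard_le hNN' this (Set.toFinite N')).symm

/-- distinct parts are disjoint -/
lemma pmax_disjoint {V : Type*} (c : V → V → ℕ) {M N N' : Set V}
    (hN : PmaxPart c M N) (hN' : PmaxPart c M N') (hne : N ≠ N') :
    N ∩ N' = ∅ := by
  rcases hN.2.1.2 N' hN'.2.1.1 with h | h | h
  · exact absurd (hN.2.2.2 N' hN'.2.1 hN'.2.2.1 h) (fun e => hne e.symm)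
  · exact absurd (hN'.2.2.2 N hN.2.1 hN.2.2.1 h) hne
  · exact h

/-- quotient color well-defined -/
lemma quotient_color_eq {V : Type*} {c : V → V → ℕ} (hsymm : ∀ u v, c u v = c v u)
    {M N₁ N₂ : Set V} (hN₁ : PmaxPart c M N₁) (hN₂ : PmaxPart c M N₂) (hne : N₁ ≠ N₂)
    {u u' v v' : V} (hu : u ∈ N₁) (hu' : u' ∈ N₁) (hv : v ∈ N₂) (hv' : v' ∈ N₂) :
    c u v = c u' v' := by
  have hdisj := pmax_disjoint c hN₁ hN₂ hne
  have hvnot : v ∉ N₁ := fun h => by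
    have : v ∈ N₁ ∩ N₂ := ⟨h, hv⟩
    rw [hdisj] at this; exact this
  have hu'not : u' ∉ N₂ := fun h => by
    have : u' ∈ N₁ ∩ N₂ := ⟨hu', h⟩
    rw [hdisj] at this; exact this
  have e1 : c u v = c u' v := hN₁.2.1.1 u hu u' hu' v hvnot
  have e2 : c v u' = c v' u' := hN₂.2.1.1 v hv v' hv' u' hu'not
  rw [e1, hsymm u' v, e2, hsymm v' u']

/-- Realization of the quotient graph of a strong module by two families of orders. -/
lemma quotient_realize {V : Type*} [Fintype V] (k : ℕ) (c : V → V → ℕ)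
    (hc : IsCompleteColoring k c)
    (hmono : ∀ i ∈ Finset.Icc 1 k,
      ∃ (ℓᵢ : V ≃ Fin (Fintype.card V)) (πᵢ : Equiv.Perm (Fin (Fintype.card V))),
        IsPermGraph (monoEdge c i) ℓᵢ πᵢ)
    (hprime : ∀ M : Set V, IsStrongModule c M → 3 ≤ M.ncard → ¬ IsSeriesModule c M →
      ∃ i j : ℕ, i ≠ j ∧ QuotientColorAppears c M i ∧ QuotientColorAppears c M j ∧
        ∀ i' : ℕ, QuotientColorAppears c M i' → i' = i ∨ i' = j)
    {M : Set V} (hM : IsStrongModule c M) (h2 : 1 < M.ncard) :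
    ∃ (F : Set V → ℕ) (Gq : ℕ → Set V → ℕ),
      Set.InjOn F {N | PmaxPart c M N} ∧ (∀ i, Set.InjOn (Gq i) {N | PmaxPart c M N}) ∧
      ∀ i : ℕ, ∀ N₁, PmaxPart c M N₁ → ∀ N₂, PmaxPart c M N₂ → N₁ ≠ N₂ →
        ∀ u ∈ N₁, ∀ v ∈ N₂,
          (c u v = i ↔ ((F N₂ < F N₁ ∧ Gq i N₁ < Gq i N₂) ∨
                        (F N₁ < F N₂ ∧ Gq i N₂ < Gq i N₁))) := by
  classical
  set P : Set (Set V) := {N | PmaxPart c M N} with hPdef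
  have hPfin : P.Finite := Set.toFinite P
  by_cases hA : ∃ i₀ : ℕ, ∀ N₁ ∈ P, ∀ N₂ ∈ P, N₁ ≠ N₂ → ∀ u ∈ N₁, ∀ v ∈ N₂, c u v = i₀
  · -- monochromatic (or degenerate) quotient
    obtain ⟨i₀, hi₀⟩ := hA
    obtain ⟨m, ⟨e⟩⟩ := Finite.exists_equiv_fin (Set V)
    set F : Set V → ℕ := cmpr P (fun N => (e N : ℕ)) with hF
    set p : ℕ := P.ncard with hp
    have hFinj : Set.InjOn F P := by
      intro N hN N' hN' h
      have := (cmpr_eq_iff hPfin _ hN hN').1 h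
      exact e.injective (Fin.val_injective this)
    have hFb : ∀ N ∈ P, F N < p := fun N hN => cmpr_bound hPfin _ hN
    refine ⟨F, fun i N => if i = i₀ then p - F N else F N, hFinj, ?_, ?_⟩
    · intro i
      intro N hN N' hN' he
      have b1 := hFb N hN; have b2 := hFb N' hN'
      by_cases h : i = i₀
      · have he' : p - F N = p - F N' := by simpa [h] using he
        exact hFinj hN hN' (by omega)
      · have he' : F N = F N' := by simpa [h] using he
        exact hFinj hN hN' he'
    · intro i N₁ hN₁ N₂ hN₂ hne u hu v hv
      have hcol : c u v = i₀ := hi₀ N₁ hN₁ N₂ hN₂ hne u hu v hv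
      have b1 := hFb N₁ hN₁; have b2 := hFb N₂ hN₂
      have hFne : F N₁ ≠ F N₂ := fun h => hne (hFinj hN₁ hN₂ h)
      by_cases h : i = i₀
      · simp only [h, ite_true]; omega
      · simp only [if_neg h]; omega
  · -- at least two colors in the quotient
    push_neg at hA
    have hMne : M.Nonempty := by
      rcases Set.eq_empty_or_nonempty M with h | h
      · rw [h] at h2; simp at h2
      · exact h
    obtain ⟨A₁, hA₁, A₂, hA₂, hAne, u₀, hu₀, v₀, hv₀, _⟩ := hA 0
    set i₀ : ℕ := c u₀ v₀ with hi₀def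
    obtain ⟨B₁, hB₁, B₂, hB₂, hBne, u₁, hu₁, v₁, hv₁, hne₁⟩ := hA i₀
    -- not a series module
    have hnotser : ¬ IsSeriesModule c M := by
      rintro ⟨-, hs⟩
      exact hne₁ (hs A₁ A₂ B₁ B₂ hA₁ hA₂ hB₁ hB₂ hAne hBne u₀ v₀ u₁ v₁ hu₀ hv₀ hu₁ hv₁).symm
    -- three distinct parts
    have hthree : ∃ Q₁ Q₂ Q₃ : Set V, Q₁ ∈ P ∧ Q₂ ∈ P ∧ Q₃ ∈ P ∧
        Q₁ ≠ Q₂ ∧ Q₁ ≠ Q₃ ∧ Q₂ ≠ Q₃ := by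
      by_cases hc1 : B₁ = A₁ ∧ B₂ = A₂
      · have h := quotient_color_eq hc.1 hB₁ hB₂ hBne (hc1.1 ▸ hu₀) hu₁ (hc1.2 ▸ hv₀) hv₁
        exact absurd (h.symm.trans hi₀def.symm) hne₁
      by_cases hc2 : B₁ = A₂ ∧ B₂ = A₁
      · have : c v₀ u₀ = c u₁ v₁ := quotient_color_eq hc.1 hB₁ hB₂ hBne
          (hc2.1 ▸ hv₀) hu₁ (hc2.2 ▸ hu₀) hv₁
        rw [hc.1 v₀ u₀] at this
        exact absurd (this.symm.trans hi₀def.symm) hne₁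
      · by_cases h3 : B₁ ≠ A₁ ∧ B₁ ≠ A₂
        · exact ⟨A₁, A₂, B₁, hA₁, hA₂, hB₁, hAne, fun h => h3.1 h.symm, fun h => h3.2 h.symm⟩
        · push_neg at h3
          by_cases h4 : B₁ = A₁
          · refine ⟨A₁, A₂, B₂, hA₁, hA₂, hB₂, hAne, ?_, ?_⟩
            · intro h; exact hBne (h4.trans h)
            · intro h; exact hc1 ⟨h4, h.symm⟩
          · have h5 : B₁ = A₂ := h3 h4
            refine ⟨A₁, A₂, B₂, hA₁, hA₂, hB₂, hAne, ?_, ?_⟩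
            · intro h; exact hc2 ⟨h5, h.symm⟩
            · intro h; exact hBne (h5.trans h)
    have h3card : 3 ≤ M.ncard := by
      obtain ⟨Q₁, Q₂, Q₃, hQ₁, hQ₂, hQ₃, h12, h13, h23⟩ := hthree
      obtain ⟨x₁, hx₁⟩ := hQ₁.1
      obtain ⟨x₂, hx₂⟩ := hQ₂.1
      obtain ⟨x₃, hx₃⟩ := hQ₃.1
      have d12 : x₁ ≠ x₂ := fun h => by
        have : x₁ ∈ Q₁ ∩ Q₂ := ⟨hx₁, h ▸ hx₂⟩
        rw [pmax_disjoint c hQ₁ hQ₂ h12] at this; exact this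
      have d13 : x₁ ≠ x₃ := fun h => by
        have : x₁ ∈ Q₁ ∩ Q₃ := ⟨hx₁, h ▸ hx₃⟩
        rw [pmax_disjoint c hQ₁ hQ₃ h13] at this; exact this
      have d23 : x₂ ≠ x₃ := fun h => by
        have : x₂ ∈ Q₂ ∩ Q₃ := ⟨hx₂, h ▸ hx₃⟩
        rw [pmax_disjoint c hQ₂ hQ₃ h23] at this; exact this
      have hsub : ({x₁, x₂, x₃} : Set V) ⊆ M :=by
        intro x hx
        rcases hx with rfl | rfl | rfl
        · exact hQ₁.2.2.1.1 hx₁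
        · exact hQ₂.2.2.1.1 hx₂
        · exact hQ₃.2.2.1.1 hx₃
      calc 3 = ({x₁, x₂, x₃} : Set V).ncard := (Set.ncard_eq_three.2 ⟨x₁,x₂,x₃,d12,d13,d23,rfl⟩).symm
        _ ≤ M.ncard := Set.ncard_le_ncard hsub (Set.toFinite M)
    obtain ⟨i, j, hij, hi, hj, hall⟩ := hprime M hM h3card hnotser
    -- i is a genuine color
    set n := Fintype.card V with hn
    have hik : i ∈ Finset.Icc 1 k := by
      obtain ⟨C₁, C₂, hC₁, hC₂, hCne, u, hu, v, hv, hcuv⟩ := hi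
      have huv : u ≠ v := fun h => by
        have : u ∈ C₁ ∩ C₂ := ⟨hu, h ▸ hv⟩
        rw [pmax_disjoint c hC₁ hC₂ hCne] at this; exact this
      exact hcuv ▸ hc.2.1 u v huv
    obtain ⟨ℓi, πi, hpi⟩ := hmono i hik
    -- representatives
    have hex : ∀ N : Set V, ∃ x : V, N ∈ P → x ∈ N := by
      intro N
      by_cases h : N ∈ P
      · exact ⟨h.1.choose, fun _ => h.1.choose_spec⟩
      · exact ⟨hMne.choose, fun hh => absurd hh h⟩
    choose rep hrep using hex
    have hrepinj : ∀ N ∈ P, ∀ N' ∈ P, N ≠ N' → rep N ≠ rep N' := by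
      intro N hN N' hN' hne h
      have : rep N ∈ N ∩ N' := ⟨hrep N hN, h ▸ hrep N' hN'⟩
      rw [pmax_disjoint c hN hN' hne] at this; exact this
    have hij' : ¬ (j = i) := fun e => hij e.symm
    obtain ⟨F, hFeq⟩ : ∃ F : Set V → ℕ, ∀ N, F N = (ℓi (rep N) : ℕ) := ⟨_, fun _ => rfl⟩
    obtain ⟨Gi, hGieq⟩ : ∃ Gi : Set V → ℕ,
        ∀ N, Gi N = ((πi⁻¹ (ℓi (rep N)) : Fin n) : ℕ) := ⟨_, fun _ => rfl⟩
    have hFinj : Set.InjOn F P := by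
      intro N hN N' hN' h
      rw [hFeq, hFeq] at h
      by_contra hne
      exact hrepinj N hN N' hN' hne (ℓi.injective (Fin.val_injective h))
    have hGiinj : Set.InjOn Gi P := by
      intro N hN N' hN' h
      rw [hGieq, hGieq] at h
      by_contra hne
      exact hrepinj N hN N' hN' hne
        (ℓi.injective (πi⁻¹.injective (Fin.val_injective h)))
    have hGib : ∀ N, Gi N < n := fun N => by
      rw [hGieq]; exact (πi⁻¹ (ℓi (rep N))).isLt
    refine ⟨F, fun i' N => if i' = i then Gi N else if i' = j then n - Gi N else F N,
      hFinj, ?_, ?_⟩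
    · intro i'
      intro N hN N' hN' he
      have b1 := hGib N; have b2 := hGib N'
      by_cases h : i' = i
      · exact hGiinj hN hN' (by simpa [h] using he)
      · by_cases h' : i' = j
        · have he' : n - Gi N = n - Gi N' := by simpa [h, h', hij'] using he
          exact hGiinj hN hN' (by omega)
        · exact hFinj hN hN' (by simpa [h, h'] using he)
    · intro i' N₁ hN₁ N₂ hN₂ hne u hu v hv
      have hcr : c u v = c (rep N₁) (rep N₂) :=
        quotient_color_eq hc.1 hN₁ hN₂ hne hu (hrep N₁ hN₁) hv (hrep N₂ hN₂)
      have hrne : rep N₁ ≠ rep N₂ := hrepinj N₁ hN₁ N₂ hN₂ hne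
      have h1 := hpi (rep N₁) (rep N₂)
      simp only [monoEdge, Fin.lt_def] at h1
      have hkey : c u v = i ↔
          ((F N₂ < F N₁ ∧ Gi N₁ < Gi N₂) ∨ (F N₁ < F N₂ ∧ Gi N₂ < Gi N₁)) := by
        rw [hcr]
        simp only [hFeq, hGieq]
        constructor
        · intro h
          exact h1.1 ⟨hrne, h⟩
        · intro h
          exact (h1.2 h).2
      have hcol2 : c u v = i ∨ c u v = j :=
        hall (c u v) ⟨N₁, N₂, hN₁, hN₂, hne, u, hu, v, hv, rfl⟩
      have hFne : F N₁ ≠ F N₂ := fun h => hne (hFinj hN₁ hN₂ h)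
      have hGne : Gi N₁ ≠ Gi N₂ := fun h => hne (hGiinj hN₁ hN₂ h)
      have b1 := hGib N₁; have b2 := hGib N₂
      by_cases h : i' = i
      · simp only [h, ite_true]; omega
      · by_cases h' : i' = j
        · simp only [h', hij', ite_false, ite_true, if_neg hij']; omega
        · simp only [if_neg h, if_neg h']; omega

lemma key {V : Type*} [Fintype V] (k : ℕ) (c : V → V → ℕ)
    (hc : IsCompleteColoring k c)
    (hmono : ∀ i ∈ Finset.Icc 1 k,
      ∃ (ℓᵢ : V ≃ Fin (Fintype.card V)) (πᵢ : Equiv.Perm (Fin (Fintype.card V))),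
        IsPermGraph (monoEdge c i) ℓᵢ πᵢ)
    (hprime : ∀ M : Set V, IsStrongModule c M → 3 ≤ M.ncard → ¬ IsSeriesModule c M →
      ∃ i j : ℕ, i ≠ j ∧ QuotientColorAppears c M i ∧ QuotientColorAppears c M j ∧
        ∀ i' : ℕ, QuotientColorAppears c M i' → i' = i ∨ i' = j) :
    ∀ n : ℕ, ∀ M : Set V, IsStrongModule c M → M.Nonempty → M.ncard = n →
    ∃ (f : V → ℕ) (g : ℕ → V → ℕ),
      (∀ v ∈ M, f v < M.ncard) ∧ (∀ i : ℕ, ∀ v ∈ M, g i v < M.ncard) ∧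
      Set.InjOn f M ∧ (∀ i : ℕ, Set.InjOn (g i) M) ∧
      (∀ i : ℕ, ∀ u ∈ M, ∀ v ∈ M,
        (monoEdge c i u v ↔ ((f v < f u ∧ g i u < g i v) ∨ (f u < f v ∧ g i v < g i u)))) := by
  intro n
  induction n using Nat.strong_induction_on with
  | _ n ih =>
    intro M hM hMne hcard
    by_cases h2 : 1 < M.ncard
    case neg =>
      -- M is a singleton
      have h1 : M.ncard = 1 := by
        have := hMne.ncard_pos (Set.toFinite M)
        omega
      obtain ⟨v, rfl⟩ := Set.ncard_eq_one.1 h1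
      refine ⟨fun _ => 0, fun _ _ => 0, ?_, ?_, ?_, ?_, ?_⟩
      · intro w hw; rw [h1]; exact Nat.zero_lt_one
      · intro i w hw; rw [h1]; exact Nat.zero_lt_one
      · intro a ha b hb _
        rw [Set.mem_singleton_iff] at ha hb; rw [ha, hb]
      · intro i a ha b hb _
        rw [Set.mem_singleton_iff] at ha hb; rw [ha, hb]
      · intro i u hu v' hv'
        rw [Set.mem_singleton_iff] at hu hv'
        subst hu; subst hv'
        simp [monoEdge]
    case pos =>
      obtain ⟨F, Gq, hFinj, hGqinj, hq⟩ := quotient_realize k c hc hmono hprime hM h2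
      have hptex : ∀ v ∈ M, ∃ N, PmaxPart c M N ∧ v ∈ N :=
        fun v hv => exists_pmaxpart c hM h2 hv
      choose! pt hpt1 hpt2 using hptex
      -- IH applied to each part
      have hIH : ∀ N, PmaxPart c M N →
          ∃ (f : V → ℕ) (g : ℕ → V → ℕ),
            (∀ v ∈ N, f v < N.ncard) ∧ (∀ i : ℕ, ∀ v ∈ N, g i v < N.ncard) ∧
            Set.InjOn f N ∧ (∀ i : ℕ, Set.InjOn (g i) N) ∧
            (∀ i : ℕ, ∀ u ∈ N, ∀ v ∈ N,
              (monoEdge c i u v ↔ ((f v < f u ∧ g i u < g i v) ∨ (f u < f v ∧ g i v < g i u)))) := by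
        intro N hN
        have hlt : N.ncard < n := by
          rw [← hcard]
          exact Set.ncard_lt_ncard hN.2.2.1 (Set.toFinite M)
        exact ih N.ncard hlt N hN.2.1 hN.1 rfl
      choose! fN gN hb1 hb2 hinj1 hinj2 hedge using hIH
      set B := M.ncard with hB
      have hbF : ∀ N, PmaxPart c M N → ∀ v ∈ N, fN N v < B := fun N hN v hv =>
        lt_of_lt_of_le (hb1 N hN v hv) (Set.ncard_le_ncard hN.2.2.1.subset (Set.toFinite M))
      have hbG : ∀ N, PmaxPart c M N → ∀ i, ∀ v ∈ N, gN N i v < B := fun N hN i v hv =>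
        lt_of_lt_of_le (hb2 N hN i v hv) (Set.ncard_le_ncard hN.2.2.1.subset (Set.toFinite M))
      -- generic lexicographic comparison lemma
      have keylt : ∀ (Φ : Set V → ℕ) (φ : Set V → V → ℕ) (f₀ : V → ℕ),
          (∀ v, f₀ v = Φ (pt v) * B + φ (pt v) v) →
          Set.InjOn Φ {N | PmaxPart c M N} →
          (∀ N, PmaxPart c M N → ∀ v ∈ N, φ N v < B) →
          ∀ u ∈ M, ∀ v ∈ M,
            (pt u = pt v → (f₀ u < f₀ v ↔ φ (pt u) u < φ (pt u) v)) ∧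
            (pt u ≠ pt v → (f₀ u < f₀ v ↔ Φ (pt u) < Φ (pt v))) := by
        intro Φ φ f₀ hf₀ hΦ hφ u hu v hv
        have b1 : φ (pt u) u < B := hφ _ (hpt1 u hu) u (hpt2 u hu)
        have b2 : φ (pt v) v < B := hφ _ (hpt1 v hv) v (hpt2 v hv)
        constructor
        · intro hp
          rw [hf₀ u, hf₀ v, ← hp]
          exact lex_lt_iff_of_eq
        · intro hp
          have hΦne : Φ (pt u) ≠ Φ (pt v) :=
            fun e => hp (hΦ (hpt1 u hu) (hpt1 v hv) e)
          rw [hf₀ u, hf₀ v]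
          exact lex_lt_iff_of_ne b1 b2 hΦne
      obtain ⟨f₀, hf₀⟩ : ∃ f₀ : V → ℕ, ∀ v, f₀ v = F (pt v) * B + fN (pt v) v :=
        ⟨_, fun _ => rfl⟩
      obtain ⟨g₀, hg₀⟩ : ∃ g₀ : ℕ → V → ℕ, ∀ i v, g₀ i v = Gq i (pt v) * B + gN (pt v) i v :=
        ⟨_, fun _ _ => rfl⟩
      have kf := keylt F fN f₀ hf₀ hFinj hbF
      have kg : ∀ i, ∀ u ∈ M, ∀ v ∈ M,
          (pt u = pt v → (g₀ i u < g₀ i v ↔ gN (pt u) i u < gN (pt u) i v)) ∧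
          (pt u ≠ pt v → (g₀ i u < g₀ i v ↔ Gq i (pt u) < Gq i (pt v))) :=
        fun i => keylt (Gq i) (fun N w => gN N i w) (g₀ i) (hg₀ i) (hGqinj i)
          (fun N hN v hv => hbG N hN i v hv)
      -- the edge condition for f₀, g₀
      have hedge₀ : ∀ i : ℕ, ∀ u ∈ M, ∀ v ∈ M,
          (monoEdge c i u v ↔
            ((f₀ v < f₀ u ∧ g₀ i u < g₀ i v) ∨ (f₀ u < f₀ v ∧ g₀ i v < g₀ i u))) := by
        intro i u hu v hv
        by_cases hp : pt u = pt v
        · have hvN : v ∈ pt u := by rw [hp]; exact hpt2 v hv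
          have hE := hedge (pt u) (hpt1 u hu) i u (hpt2 u hu) v hvN
          have e1 := (kf u hu v hv).1 hp
          have e2 := (kf v hv u hu).1 hp.symm
          rw [← hp] at e2
          have e3 := (kg i u hu v hv).1 hp
          have e4 := (kg i v hv u hu).1 hp.symm
          rw [← hp] at e4
          rw [e1, e2, e3, e4]
          exact hE
        · have huv : u ≠ v := fun e => hp (by rw [e])
          have hq' := hq i (pt u) (hpt1 u hu) (pt v) (hpt1 v hv) hp u (hpt2 u hu) v (hpt2 v hv)
          have e1 := (kf u hu v hv).2 hp
          have e2 := (kf v hv u hu).2 (fun e => hp e.symm)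
          have e3 := (kg i u hu v hv).2 hp
          have e4 := (kg i v hv u hu).2 (fun e => hp e.symm)
          simp only [monoEdge]
          rw [e1, e2, e3, e4]
          constructor
          · rintro ⟨-, hcuv⟩
            exact hq'.1 hcuv
          · intro h
            exact ⟨huv, hq'.2 h⟩
      -- injectivity of f₀ and g₀
      have hinjf₀ : Set.InjOn f₀ M := by
        intro a ha b hb he
        by_cases hp : pt a = pt b
        · have e1 := (kf a ha b hb).1 hp
          have e2 := (kf b hb a ha).1 hp.symm
          rw [← hp] at e2
          have : fN (pt a) a = fN (pt a) b := by omega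
          exact hinj1 (pt a) (hpt1 a ha) (hpt2 a ha) (by rw [hp]; exact hpt2 b hb) this
        · exfalso
          have e1 := (kf a ha b hb).2 hp
          have e2 := (kf b hb a ha).2 (fun e => hp e.symm)
          have : F (pt a) = F (pt b) := by omega
          exact hp (hFinj (hpt1 a ha) (hpt1 b hb) this)
      have hinjg₀ : ∀ i, Set.InjOn (g₀ i) M := by
        intro i a ha b hb he
        by_cases hp : pt a = pt b
        · have e1 := (kg i a ha b hb).1 hp
          have e2 := (kg i b hb a ha).1 hp.symm
          rw [← hp] at e2
          have : gN (pt a) i a = gN (pt a) i b := by omega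
          exact hinj2 (pt a) (hpt1 a ha) i (hpt2 a ha) (by rw [hp]; exact hpt2 b hb) this
        · exfalso
          have e1 := (kg i a ha b hb).2 hp
          have e2 := (kg i b hb a ha).2 (fun e => hp e.symm)
          have : Gq i (pt a) = Gq i (pt b) := by omega
          exact hp (hGqinj i (hpt1 a ha) (hpt1 b hb) this)
      -- compress to obtain bounds
      have hMfin : M.Finite := Set.toFinite M
      refine ⟨cmpr M f₀, fun i => cmpr M (g₀ i), ?_, ?_, ?_, ?_, ?_⟩
      · intro v hv; exact cmpr_bound hMfin f₀ hv
      · intro i v hv; exact cmpr_bound hMfin (g₀ i) hv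
      · intro a ha b hb he
        exact hinjf₀ ha hb ((cmpr_eq_iff hMfin f₀ ha hb).1 he)
      · intro i a ha b hb he
        exact hinjg₀ i ha hb ((cmpr_eq_iff hMfin (g₀ i) ha hb).1 he)
      · intro i u hu v hv
        rw [cmpr_lt_iff hMfin f₀ hv hu, cmpr_lt_iff hMfin f₀ hu hv,
          cmpr_lt_iff hMfin (g₀ i) hu hv, cmpr_lt_iff hMfin (g₀ i) hv hu]
        exact hedge₀ i u hu v hv

/-- If every monochromatic subgraph `G_{|i}` of `G` is a simple
permutation graph (with some labeling, possibly different for each `i`), and for every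
strong prime module `M` of `G` with `|M| ≥ 3` exactly two distinct colors appear on
the edges of the quotient graph `G[M]/P_max(M)`, then `G` is a complete edge-colored
permutation graph. -/
theorem stmt16 {V : Type*} [Fintype V] [Nonempty V] (k : ℕ) (c : V → V → ℕ)
    (hc : IsCompleteColoring k c)
    (hmono : ∀ i ∈ Finset.Icc 1 k,
      ∃ (ℓᵢ : V ≃ Fin (Fintype.card V)) (πᵢ : Equiv.Perm (Fin (Fintype.card V))),
        IsPermGraph (monoEdge c i) ℓᵢ πᵢ)
    (hprime : ∀ M : Set V, IsStrongModule c M → 3 ≤ M.ncard → ¬ IsSeriesModule c M →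
      ∃ i j : ℕ, i ≠ j ∧ QuotientColorAppears c M i ∧ QuotientColorAppears c M j ∧
        ∀ i' : ℕ, QuotientColorAppears c M i' → i' = i ∨ i' = j) :
    IsCECPG c := by
  classical
  have huniv : IsStrongModule c (Set.univ : Set V) := by
    constructor
    · intro u _ w _ v hv
      exact absurd (Set.mem_univ v) hv
    · intro M' _
      exact Or.inr (Or.inl (Set.subset_univ M'))
  obtain ⟨f, g, hbf, hbg, hinjf, hinjg, hedge⟩ :=
    key k c hc hmono hprime (Set.univ : Set V).ncard Set.univ huniv Set.univ_nonempty rfl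
  have hcard : (Set.univ : Set V).ncard = Fintype.card V := (Set.ncard_univ V).trans Nat.card_eq_fintype_card
  have hbf' : ∀ v, f v < Fintype.card V := fun v => hcard ▸ hbf v (Set.mem_univ v)
  have hfinj : Function.Injective f := fun a b h => hinjf trivial trivial h
  have hℓbij : Function.Bijective (fun v => (⟨f v, hbf' v⟩ : Fin (Fintype.card V))) := by
    rw [Fintype.bijective_iff_injective_and_card]
    exact ⟨fun a b h => hfinj (congrArg Fin.val h), (Fintype.card_fin _).symm⟩
  set ℓ : V ≃ Fin (Fintype.card V) := Equiv.ofBijective _ hℓbij with hℓ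
  have hℓval : ∀ a : V, (ℓ a : ℕ) = f a := fun a => rfl
  have hℓlt : ∀ a b : V, (ℓ a < ℓ b ↔ f a < f b) := fun a b => Iff.rfl
  have hufin : (Set.univ : Set (Fin (Fintype.card V))).Finite := Set.toFinite _
  have hπex : ∀ i : ℕ, ∃ π : Equiv.Perm (Fin (Fintype.card V)),
      ∀ u v : V, (π⁻¹ (ℓ u) < π⁻¹ (ℓ v) ↔ g i u < g i v) := by
    intro i
    obtain ⟨hfun, hhdef⟩ : ∃ h : Fin (Fintype.card V) → ℕ, ∀ a, h a = g i (ℓ.symm a) :=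
      ⟨_, fun _ => rfl⟩
    have hbound : ∀ a, cmpr Set.univ hfun a < Fintype.card V := fun a => by
      have := cmpr_bound hufin hfun (Set.mem_univ a)
      rwa [Set.ncard_univ, Nat.card_eq_fintype_card, Fintype.card_fin] at this
    have hσbij : Function.Bijective (fun a => (⟨cmpr Set.univ hfun a, hbound a⟩ :
        Fin (Fintype.card V))) := by
      rw [Fintype.bijective_iff_injective_and_card]
      refine ⟨fun a b h => ?_, rfl⟩
      have h' : cmpr Set.univ hfun a = cmpr Set.univ hfun b := congrArg Fin.val h
      have h'' : hfun a = hfun b := (cmpr_eq_iff hufin hfun trivial trivial).1 h'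
      rw [hhdef, hhdef] at h''
      exact ℓ.symm.injective (hinjg i trivial trivial h'')
    refine ⟨(Equiv.ofBijective _ hσbij)⁻¹, ?_⟩
    intro u v
    have hinv : (Equiv.ofBijective _ hσbij)⁻¹⁻¹ = Equiv.ofBijective _ hσbij := inv_inv _
    rw [hinv]
    have hlt : cmpr Set.univ hfun (ℓ u) < cmpr Set.univ hfun (ℓ v) ↔ hfun (ℓ u) < hfun (ℓ v) :=
      cmpr_lt_iff hufin hfun trivial trivial
    rw [show (Equiv.ofBijective _ hσbij) (ℓ u) < (Equiv.ofBijective _ hσbij) (ℓ v) ↔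
        cmpr Set.univ hfun (ℓ u) < cmpr Set.univ hfun (ℓ v) from Iff.rfl]
    rw [hlt, hhdef, hhdef, ℓ.symm_apply_apply, ℓ.symm_apply_apply]
  choose π hπ using hπex
  refine ⟨ℓ, π, ?_⟩
  intro i u v
  rw [hℓlt v u, hℓlt u v, hπ i u v, hπ i v u]
  exact hedge i u trivial v trivial
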